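/- Σ_{n ≤ x} Σ_{j=1}^n log (j,n)_b = −(ζ'(2b)/(2ζ(2b))) x² + O(x) as x → ∞, where b ≥ 2 is a fixed integer. -/

import Mathlib

open ArithmeticFunction Finset LSeries.notation

noncomputable def ggcd (b r s : ℕ) : ℕ := sSup {d : ℕ | 0 < d ∧ d ^ b ∣ r ∧ d ^ b ∣ s}

section basics
variable {b j n : ℕ}

lemma ggcd_bdd (hb : 1 ≤ b) (hj : 0 < j) :
    BddAbove {d : ℕ | 0 < d ∧ d ^ b ∣ j ∧ d ^ b ∣ n} := by
  refine ⟨j, fun d hd => ?_⟩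
  obtain ⟨hd0, hdj, _⟩ := hd
  calc d ≤ d ^ b := Nat.le_self_pow (by omega) d
  _ ≤ j := Nat.le_of_dvd hj hdj

lemma ggcd_mem (hb : 1 ≤ b) (hj : 0 < j) (hn : 0 < n) :
    0 < ggcd b j n ∧ (ggcd b j n) ^ b ∣ j ∧ (ggcd b j n) ^ b ∣ n :=
  Nat.sSup_mem ⟨1, by simp⟩ (ggcd_bdd hb hj)

lemma le_ggcd (hb : 1 ≤ b) (hj : 0 < j) {d : ℕ} (hd0 : 0 < d)
    (h1 : d ^ b ∣ j) (h2 : d ^ b ∣ n) : d ≤ ggcd b j n :=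
  le_csSup (ggcd_bdd hb hj) ⟨hd0, h1, h2⟩

lemma pow_lcm_dvd {a c k m : ℕ} (hm : 0 < m) (hk : 0 < k)
    (ha : a ^ k ∣ m) (hc : c ^ k ∣ m) : (Nat.lcm a c) ^ k ∣ m := by
  have ha0 : a ≠ 0 := by
    rintro rfl; rw [zero_pow (by omega)] at ha
    exact absurd (Nat.eq_zero_of_zero_dvd ha) (by omega)
  have hc0 : c ≠ 0 := by
    rintro rfl; rw [zero_pow (by omega)] at hc
    exact absurd (Nat.eq_zero_of_zero_dvd hc) (by omega)
  have hl0 : Nat.lcm a c ≠ 0 := Nat.lcm_ne_zero ha0 hc0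
  rw [← Nat.factorization_le_iff_dvd (pow_ne_zero _ hl0) (by omega)]
  rw [← Nat.factorization_le_iff_dvd (pow_ne_zero _ ha0) (by omega)] at ha
  rw [← Nat.factorization_le_iff_dvd (pow_ne_zero _ hc0) (by omega)] at hc
  intro p
  have hlcm := Nat.factorization_lcm ha0 hc0
  rw [Nat.factorization_pow, Finsupp.smul_apply, hlcm, Finsupp.sup_apply]
  have h1 := ha p
  have h2 := hc p
  rw [Nat.factorization_pow, Finsupp.smul_apply] at h1 h2
  rcases le_total (a.factorization p) (c.factorization p) with h | h
  · rw [sup_of_le_right h]; exact h2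
  · rw [sup_of_le_left h]; exact h1

end basics

lemma dvd_ggcd_iff {b j n : ℕ} (hb : 1 ≤ b) (hj : 0 < j) (hn : 0 < n) {m : ℕ} (hm : 0 < m) :
    m ∣ ggcd b j n ↔ m ^ b ∣ j ∧ m ^ b ∣ n := by
  obtain ⟨hg0, hgj, hgn⟩ := ggcd_mem hb hj hn
  constructor
  · intro h
    exact ⟨(pow_dvd_pow_of_dvd h b).trans hgj, (pow_dvd_pow_of_dvd h b).trans hgn⟩
  · rintro ⟨h1, h2⟩
    have hL1 : (Nat.lcm m (ggcd b j n)) ^ b ∣ j := pow_lcm_dvd hj (by omega) h1 hgj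
    have hL2 : (Nat.lcm m (ggcd b j n)) ^ b ∣ n := pow_lcm_dvd hn (by omega) h2 hgn
    have hLle : Nat.lcm m (ggcd b j n) ≤ ggcd b j n :=
      le_ggcd hb hj (Nat.pos_of_ne_zero (Nat.lcm_ne_zero (by omega) (by omega))) hL1 hL2
    have hLpos : 0 < Nat.lcm m (ggcd b j n) :=
      Nat.pos_of_ne_zero (Nat.lcm_ne_zero (by omega) (by omega))
    have heq : Nat.lcm m (ggcd b j n) = ggcd b j n :=
      le_antisymm hLle (Nat.le_of_dvd hLpos (Nat.dvd_lcm_right _ _))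
    exact heq ▸ Nat.dvd_lcm_left _ _

lemma log_ggcd_eq {b j n N : ℕ} (hb : 1 ≤ b) (hj : 0 < j) (hn : 0 < n) (hnN : n ≤ N) :
    Real.log (ggcd b j n) =
      ∑ m ∈ Icc 1 N, if m ^ b ∣ j ∧ m ^ b ∣ n then Λ m else 0 := by
  obtain ⟨hg0, hgj, hgn⟩ := ggcd_mem hb hj hn
  rw [← Finset.sum_filter]
  have hset : (Icc 1 N).filter (fun m => m ^ b ∣ j ∧ m ^ b ∣ n) = (ggcd b j n).divisors := by
    ext m
    simp only [mem_filter, mem_Icc, Nat.mem_divisors]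
    constructor
    · rintro ⟨⟨h1, _⟩, h2⟩
      exact ⟨(dvd_ggcd_iff hb hj hn (by omega)).2 h2, by omega⟩
    · rintro ⟨hdvd, hne⟩
      have hm0 : 0 < m := Nat.pos_of_dvd_of_pos hdvd hg0
      have hmn : m ≤ n := le_trans (Nat.le_of_dvd hg0 hdvd)
        (le_trans (Nat.le_self_pow (by omega) _) (Nat.le_of_dvd hn hgn))
      exact ⟨⟨hm0, by omega⟩, (dvd_ggcd_iff hb hj hn hm0).1 hdvd⟩
  rw [hset, vonMangoldt_sum]

lemma gauss (K : ℕ) : ∑ k ∈ Icc 1 K, (k : ℝ) = K * (K + 1) / 2 := by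
  induction K with
  | zero => simp
  | succ n ih =>
    rw [Finset.sum_Icc_succ_top (by omega), ih]
    push_cast; ring

lemma count_dvd_Icc (n q : ℕ) : ((Icc 1 n).filter (fun j => q ∣ j)).card = n / q := by
  have : Icc 1 n = Ioc 0 n := rfl
  rw [this]
  exact Nat.Ioc_filter_dvd_card_eq_div n q

lemma swap_sum {b N : ℕ} (hb : 1 ≤ b) :
    ∑ n ∈ Icc 1 N, ∑ j ∈ Icc 1 n, Real.log (ggcd b j n)
      = ∑ m ∈ Icc 1 N, Λ m * ∑ k ∈ Icc 1 (N / m ^ b), (k : ℝ) := by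
  have step1 : ∀ n ∈ Icc 1 N, ∑ j ∈ Icc 1 n, Real.log (ggcd b j n)
      = ∑ m ∈ Icc 1 N, ∑ j ∈ Icc 1 n, (if m ^ b ∣ j ∧ m ^ b ∣ n then Λ m else 0) := by
    intro n hn
    rw [mem_Icc] at hn
    rw [Finset.sum_comm]
    refine Finset.sum_congr rfl fun j hj => ?_
    rw [mem_Icc] at hj
    exact log_ggcd_eq hb (by omega) (by omega) hn.2
  rw [Finset.sum_congr rfl step1, Finset.sum_comm]
  refine Finset.sum_congr rfl fun m hm => ?_
  rw [mem_Icc] at hm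
  have hq : 0 < m ^ b := Nat.pow_pos (by omega)
  -- inner: ∑ n ∈ Icc 1 N, ∑ j ∈ Icc 1 n, ite = Λ m * ∑ k ∈ Icc 1 (N / m^b), k
  have inner : ∀ n ∈ Icc 1 N, ∑ j ∈ Icc 1 n, (if m ^ b ∣ j ∧ m ^ b ∣ n then Λ m else 0)
      = if m ^ b ∣ n then Λ m * (n / m ^ b : ℕ) else 0 := by
    intro n hn
    by_cases hmn : m ^ b ∣ n
    · simp only [hmn, and_true, if_true]
      rw [← Finset.sum_filter, Finset.sum_const, count_dvd_Icc, nsmul_eq_mul, mul_comm]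
    · simp [hmn]
  rw [Finset.sum_congr rfl inner, ← Finset.sum_filter, Finset.mul_sum]
  refine Finset.sum_nbij' (fun n => n / m ^ b) (fun k => k * m ^ b) ?_ ?_ ?_ ?_ ?_
  · intro n hn
    simp only [mem_filter, mem_Icc] at hn
    obtain ⟨⟨h1, h2⟩, hdvd⟩ := hn
    rw [mem_Icc]
    constructor
    · exact (Nat.one_le_div_iff hq).2 (Nat.le_of_dvd (by omega) hdvd)
    · exact Nat.div_le_div_right h2
  · intro k hk
    rw [mem_Icc] at hk
    simp only [mem_filter, mem_Icc]
    refine ⟨⟨?_, ?_⟩, ⟨k, mul_comm k _⟩⟩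
    · have : 0 < k * m ^ b := Nat.mul_pos (by omega) hq
      omega
    · calc k * m ^ b ≤ (N / m ^ b) * m ^ b := Nat.mul_le_mul_right _ hk.2
      _ ≤ N := Nat.div_mul_le_self N (m ^ b)
  · intro n hn
    simp only [mem_filter] at hn
    exact Nat.div_mul_cancel hn.2
  · intro k hk
    exact Nat.mul_div_cancel k hq
  · intro n hn
    simp only [mem_filter] at hn
    rfl

lemma term_eq (k : ℕ) (hk : 1 ≤ k) (m : ℕ) :
    LSeries.term ↗Λ ((k : ℕ) : ℂ) m = ((Λ m / (m : ℝ) ^ k : ℝ) : ℂ) := by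
  rcases eq_or_ne m 0 with rfl | hm
  · simp [LSeries.term, ArithmeticFunction.map_zero, zero_pow (by omega : k ≠ 0)]
  · rw [LSeries.term_of_ne_zero hm]
    rw [Complex.cpow_natCast]
    push_cast
    rfl

lemma summable_vM (k : ℕ) (hk : 2 ≤ k) :
    Summable (fun m : ℕ => Λ m / (m : ℝ) ^ k) := by
  have h := LSeriesSummable_vonMangoldt (s := ((k : ℕ) : ℂ))
    (by simp only [Complex.natCast_re]; exact_mod_cast lt_of_lt_of_le one_lt_two hk)
  rw [LSeriesSummable] at h
  rw [← Complex.summable_ofReal]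
  exact h.congr fun m => term_eq k (by omega) m

lemma vM_term_nonneg (k m : ℕ) : 0 ≤ Λ m / (m : ℝ) ^ k :=
  div_nonneg vonMangoldt_nonneg (by positivity)

lemma LSeries_vM_eq (k : ℕ) (hk : 2 ≤ k) :
    LSeries ↗Λ ((k : ℕ) : ℂ) = ((∑' m : ℕ, Λ m / (m : ℝ) ^ k : ℝ) : ℂ) := by
  rw [LSeries, Complex.ofReal_tsum]
  exact tsum_congr fun m => term_eq k (by omega) m

lemma floor_T_bound {y : ℝ} (hy : 0 ≤ y) :
    |(⌊y⌋₊ : ℝ) * (⌊y⌋₊ + 1) / 2 - y ^ 2 / 2| ≤ 2 * y := by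
  have h1 : (⌊y⌋₊ : ℝ) ≤ y := Nat.floor_le hy
  have h2 : y < ⌊y⌋₊ + 1 := Nat.lt_floor_add_one y
  have h0 : (0 : ℝ) ≤ ⌊y⌋₊ := Nat.cast_nonneg _
  rw [abs_le]
  constructor
  · nlinarith [mul_nonneg h0 hy, sq_nonneg ((⌊y⌋₊:ℝ) - y)]
  · nlinarith [mul_nonneg h0 hy, sq_nonneg ((⌊y⌋₊:ℝ) - y)]

lemma cube_bound {b : ℕ} (hb : 2 ≤ b) {m : ℕ} (hm : 2 ≤ m) :
    Λ m / (m : ℝ) ^ (2 * b) ≤ 1 / (m : ℝ) ^ 3 := by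
  have hm1 : (1 : ℝ) ≤ m := by exact_mod_cast Nat.one_le_of_lt hm
  have hm0 : (0 : ℝ) < m := by linarith
  have hlog : Λ m ≤ (m : ℝ) := vonMangoldt_le_log.trans
    (by linarith [Real.log_le_sub_one_of_pos hm0])
  have hpow : (m : ℝ) ^ 4 ≤ (m : ℝ) ^ (2 * b) := pow_le_pow_right₀ hm1 (by omega)
  calc Λ m / (m : ℝ) ^ (2 * b) ≤ (m : ℝ) / (m : ℝ) ^ 4 :=
        div_le_div₀ (by positivity) hlog (by positivity) hpow
  _ = 1 / (m : ℝ) ^ 3 := by field_simp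

lemma tele_bound {b : ℕ} (hb : 2 ≤ b) {N : ℕ} (hN : 1 ≤ N) :
    ∀ M, N ≤ M → ∑ m ∈ Ioc N M, Λ m / (m : ℝ) ^ (2 * b)
      ≤ 1 / (2 * (N : ℝ) ^ 2) - 1 / (2 * (M : ℝ) ^ 2) := by
  intro M
  induction M with
  | zero => intro h; omega
  | succ M ih =>
    intro hM
    rcases Nat.lt_or_ge N (M + 1) with h | h
    · have hNM : N ≤ M := by omega
      have hM1 : 1 ≤ M := by omega
      rw [Finset.sum_Ioc_succ_top hNM]
      have hx : (1 : ℝ) ≤ (M : ℝ) := by exact_mod_cast hM1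
      have hstep : Λ (M + 1) / ((M + 1 : ℕ) : ℝ) ^ (2 * b)
          ≤ 1 / (2 * (M : ℝ) ^ 2) - 1 / (2 * ((M + 1 : ℕ) : ℝ) ^ 2) := by
        refine (cube_bound hb (show 2 ≤ M + 1 by omega)).trans ?_
        push_cast
        rw [div_sub_div _ _ (by positivity) (by positivity),
          div_le_div_iff₀ (by positivity) (by positivity)]
        nlinarith [sq_nonneg ((M : ℝ) + 1), sq_nonneg (M : ℝ)]
      have hih := ih hNM
      push_cast at hstep ⊢
      linarith
    · have hNM1 : N = M + 1 := by omega
      subst hNM1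
      simp

lemma tail_bound {b : ℕ} (hb : 2 ≤ b) {N : ℕ} (hN : 1 ≤ N) :
    (∑' m : ℕ, Λ m / (m : ℝ) ^ (2 * b)) - ∑ m ∈ Icc 1 N, Λ m / (m : ℝ) ^ (2 * b)
      ≤ 1 / (2 * (N : ℝ) ^ 2) := by
  rw [sub_le_iff_le_add]
  have hsum : Summable (fun m : ℕ => Λ m / (m : ℝ) ^ (2 * b)) := summable_vM (2 * b) (by omega)
  refine Summable.tsum_le_of_sum_le hsum fun s => ?_
  set M := N ⊔ s.sup _root_.id with hM
  have hNM : N ≤ M := le_sup_left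
  have hsub : s ⊆ Icc 0 M := fun x hx => by
    rw [mem_Icc]
    exact ⟨Nat.zero_le _, le_trans (Finset.le_sup (f := _root_.id) hx) le_sup_right⟩
  have h1 : ∑ m ∈ s, Λ m / (m : ℝ) ^ (2 * b) ≤ ∑ m ∈ Icc 0 M, Λ m / (m : ℝ) ^ (2 * b) :=
    Finset.sum_le_sum_of_subset_of_nonneg hsub fun i _ _ => vM_term_nonneg _ _
  have hins : Icc 0 M = insert 0 (Icc 1 M) := by
    ext x; simp only [mem_Icc, mem_insert]; omega
  have h0 : Λ 0 / ((0 : ℕ) : ℝ) ^ (2 * b) = 0 := by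
    simp [ArithmeticFunction.map_zero]
  have h2 : ∑ m ∈ Icc 0 M, Λ m / (m : ℝ) ^ (2 * b) = ∑ m ∈ Icc 1 M, Λ m / (m : ℝ) ^ (2 * b) := by
    rw [hins, Finset.sum_insert (by simp), h0, zero_add]
  have hIoc : ∀ k : ℕ, Icc 1 k = Ioc 0 k := fun k => rfl
  have h3 : ∑ m ∈ Icc 1 N, Λ m / (m : ℝ) ^ (2 * b) + ∑ m ∈ Ioc N M, Λ m / (m : ℝ) ^ (2 * b)
      = ∑ m ∈ Icc 1 M, Λ m / (m : ℝ) ^ (2 * b) := by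
    rw [hIoc N, hIoc M]
    exact Finset.sum_Ioc_consecutive _ (Nat.zero_le N) hNM
  have h4 := tele_bound hb hN M hNM
  have h5 : (0 : ℝ) ≤ 1 / (2 * (M : ℝ) ^ 2) := by positivity
  linarith

lemma partial_le_tsum {b : ℕ} (hb : 2 ≤ b) (k : ℕ) (hk : 2 ≤ k) (N : ℕ) :
    ∑ m ∈ Icc 1 N, Λ m / (m : ℝ) ^ k ≤ ∑' m : ℕ, Λ m / (m : ℝ) ^ k :=
  Summable.sum_le_tsum _ (fun i _ => vM_term_nonneg _ _) (summable_vM k hk)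

lemma tsum_vM_nonneg (k : ℕ) : 0 ≤ ∑' m : ℕ, Λ m / (m : ℝ) ^ k :=
  tsum_nonneg fun m => vM_term_nonneg _ _

theorem sum_log_ggcd_asymptotic (b : ℕ) (hb : 2 ≤ b) :
    (fun x : ℝ =>
        (∑ n ∈ Finset.Icc 1 ⌊x⌋₊, ∑ j ∈ Finset.Icc 1 n,
          (Real.log (ggcd b j n) : ℂ)) -
        (-(deriv riemannZeta (2 * b) / (2 * riemannZeta (2 * b)))) * (x : ℂ) ^ 2)
      =O[Filter.atTop] (fun x : ℝ => x) := by
  set A : ℝ := ∑' m : ℕ, Λ m / (m : ℝ) ^ (2 * b) with hA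
  set C1 : ℝ := ∑' m : ℕ, Λ m / (m : ℝ) ^ b with hC1
  have hC1nn : 0 ≤ C1 := tsum_vM_nonneg b
  -- the constant equals A/2
  have hcast : ((2 * b : ℕ) : ℂ) = 2 * (b : ℂ) := by push_cast; ring
  have hre : 1 < ((2 * b : ℕ) : ℂ).re := by
    simp only [Complex.natCast_re]; exact_mod_cast by omega
  have hzeta : riemannZeta (2 * (b : ℂ)) ≠ 0 := by
    rw [← hcast]; exact riemannZeta_ne_zero_of_one_lt_re hre
  have hL := LSeries_vonMangoldt_eq_deriv_riemannZeta_div hre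
  rw [LSeries_vM_eq (2 * b) (by omega), hcast] at hL
  have hconst : -(deriv riemannZeta (2 * (b : ℂ)) / (2 * riemannZeta (2 * (b : ℂ))))
      = ((A / 2 : ℝ) : ℂ) := by
    rw [show ((A / 2 : ℝ) : ℂ) = ((A : ℝ) : ℂ) / 2 by push_cast; ring, hL]
    rw [neg_div, neg_div, neg_inj, div_div, mul_comm (riemannZeta (2 * (b : ℂ))) 2]
  rw [Asymptotics.isBigO_iff]
  refine ⟨2 * C1 + 1, ?_⟩
  filter_upwards [Filter.eventually_ge_atTop (1 : ℝ)] with x hx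
  have hx0 : (0 : ℝ) ≤ x := by linarith
  set N : ℕ := ⌊x⌋₊ with hNdef
  have hN1 : 1 ≤ N := Nat.le_floor (by exact_mod_cast hx)
  have hN1R : (1 : ℝ) ≤ (N : ℝ) := by exact_mod_cast hN1
  have hNle : (N : ℝ) ≤ x := Nat.floor_le hx0
  have hxlt : x < (N : ℝ) + 1 := Nat.lt_floor_add_one x
  have hx2N : x ≤ 2 * (N : ℝ) := by linarith
  set S : ℝ := ∑ n ∈ Icc 1 N, ∑ j ∈ Icc 1 n, Real.log (ggcd b j n) with hS
  have hexpr : (∑ n ∈ Finset.Icc 1 N, ∑ j ∈ Finset.Icc 1 n,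
          (Real.log (ggcd b j n) : ℂ)) -
        (-(deriv riemannZeta (2 * b) / (2 * riemannZeta (2 * b)))) * (x : ℂ) ^ 2
      = ((S - A / 2 * x ^ 2 : ℝ) : ℂ) := by
    rw [hconst, hS]
    push_cast
    ring
  rw [hexpr, Complex.norm_real, Real.norm_of_nonneg hx0]
  -- main decomposition
  set P : ℝ := ∑ m ∈ Icc 1 N, Λ m / (m : ℝ) ^ (2 * b) with hP
  have hy : ∀ m : ℕ, 1 ≤ m → (0 : ℝ) < (m : ℝ) ^ b := by
    intro m hm; positivity
  have hdecomp : S - A / 2 * x ^ 2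
      = (∑ m ∈ Icc 1 N, (Λ m * (∑ k ∈ Icc 1 (N / m ^ b), (k : ℝ))
          - Λ m * (x / (m : ℝ) ^ b) ^ 2 / 2)) + (P - A) * (x ^ 2 / 2) := by
    rw [hS, swap_sum (by omega : 1 ≤ b), Finset.sum_sub_distrib]
    have h3 : ∑ m ∈ Icc 1 N, Λ m * (x / (m : ℝ) ^ b) ^ 2 / 2 = P * (x ^ 2 / 2) := by
      rw [hP, Finset.sum_mul]
      refine Finset.sum_congr rfl fun m hm => ?_
      rw [mem_Icc] at hm
      have hm0 : ((m : ℝ) ^ b) ≠ 0 := ne_of_gt (hy m hm.1)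
      have hsq : (x / (m : ℝ) ^ b) ^ 2 = x ^ 2 / (m : ℝ) ^ (2 * b) := by
        rw [div_pow, ← pow_mul, mul_comm b 2]
      rw [hsq]
      ring
    rw [h3]
    ring
  rw [hdecomp]
  -- bound the first sum
  have hE : |∑ m ∈ Icc 1 N, (Λ m * (∑ k ∈ Icc 1 (N / m ^ b), (k : ℝ))
      - Λ m * (x / (m : ℝ) ^ b) ^ 2 / 2)| ≤ 2 * C1 * x := by
    refine (Finset.abs_sum_le_sum_abs _ _).trans ?_
    have hterm : ∀ m ∈ Icc 1 N, |Λ m * (∑ k ∈ Icc 1 (N / m ^ b), (k : ℝ))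
        - Λ m * (x / (m : ℝ) ^ b) ^ 2 / 2| ≤ (2 * x) * (Λ m / (m : ℝ) ^ b) := by
      intro m hm
      rw [mem_Icc] at hm
      have hmb : (0 : ℝ) < (m : ℝ) ^ b := hy m hm.1
      have hym : (0 : ℝ) ≤ x / (m : ℝ) ^ b := by positivity
      have hKm : N / m ^ b = ⌊x / ((m : ℝ) ^ b)⌋₊ := by
        have := Nat.floor_div_natCast x (m ^ b)
        rw [hNdef]
        rw [← this]
        congr 1
        push_cast
        ring
      have heq : Λ m * (∑ k ∈ Icc 1 (N / m ^ b), (k : ℝ))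
          - Λ m * (x / (m : ℝ) ^ b) ^ 2 / 2
          = Λ m * (((⌊x / ((m : ℝ) ^ b)⌋₊ : ℝ) * (⌊x / ((m : ℝ) ^ b)⌋₊ + 1) / 2)
            - (x / (m : ℝ) ^ b) ^ 2 / 2) := by
        rw [gauss, hKm]
        ring
      rw [heq, abs_mul, abs_of_nonneg vonMangoldt_nonneg]
      calc Λ m * |(⌊x / ((m : ℝ) ^ b)⌋₊ : ℝ) * (⌊x / ((m : ℝ) ^ b)⌋₊ + 1) / 2
            - (x / (m : ℝ) ^ b) ^ 2 / 2|
          ≤ Λ m * (2 * (x / (m : ℝ) ^ b)) :=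
            mul_le_mul_of_nonneg_left (floor_T_bound hym) vonMangoldt_nonneg
        _ = (2 * x) * (Λ m / (m : ℝ) ^ b) := by field_simp
    refine (Finset.sum_le_sum hterm).trans ?_
    rw [← Finset.mul_sum]
    have := partial_le_tsum hb b hb N
    nlinarith [hC1nn]
  -- bound the second term
  have hPA : |(P - A) * (x ^ 2 / 2)| ≤ 1 := by
    have h1 : A - P ≤ 1 / (2 * (N : ℝ) ^ 2) := tail_bound hb hN1
    have h2 : P ≤ A := partial_le_tsum hb (2 * b) (by omega) N
    have h3 : |P - A| ≤ 1 / (2 * (N : ℝ) ^ 2) := by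
      rw [abs_sub_comm, abs_of_nonneg (by linarith)]; exact h1
    have h4 : x ^ 2 ≤ 4 * (N : ℝ) ^ 2 := by nlinarith
    have h5 : (0 : ℝ) < (N : ℝ) ^ 2 := by positivity
    rw [abs_mul]
    have h6 : |x ^ 2 / 2| = x ^ 2 / 2 := abs_of_nonneg (by positivity)
    rw [h6]
    calc |P - A| * (x ^ 2 / 2) ≤ (1 / (2 * (N : ℝ) ^ 2)) * (4 * (N : ℝ) ^ 2 / 2) := by
          apply mul_le_mul h3 (by linarith) (by positivity) (by positivity)
      _ = 1 := by field_simp; ring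
  calc |(∑ m ∈ Icc 1 N, (Λ m * (∑ k ∈ Icc 1 (N / m ^ b), (k : ℝ))
        - Λ m * (x / (m : ℝ) ^ b) ^ 2 / 2)) + (P - A) * (x ^ 2 / 2)|
      ≤ 2 * C1 * x + 1 := by
        refine (abs_add_le _ _).trans ?_
        linarith
    _ ≤ (2 * C1 + 1) * x := by nlinarith
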